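/- Let t ∈ ℕ and let H be a partial half-graph with sides L and R. Then H contains the half-graph H_t as a semi-induced subgraph, with the two sides of H_t embedded into L and R respectively, if and only if rk_H(L,R) ≥ t. -/

import Mathlib

/-- The bipartite graph `G[L,R]` (with sides `L` and `R`, cross edges induced by `G`)
is a partial half-graph: it embeds into some half-graph `H_n`, with `L` going to the
left side and `R` to the right side, preserving edges and non-edges between the sides. -/
def IsPartialHalfGraph {V : Type} (G : SimpleGraph V) (L R : Finset V) : Prop :=
  ∃ (n : ℕ) (f g : V → Fin n),
    Set.InjOn f (L : Set V) ∧ Set.InjOn g (R : Set V) ∧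
    ∀ u ∈ L, ∀ v ∈ R, (G.Adj u v ↔ (f u : ℕ) ≤ (g v : ℕ))

/-- The rank over `𝔽₂` of the biadjacency matrix of the vertex sets `A` and `B` in `G`. -/
noncomputable def biadjRank {V : Type} (G : SimpleGraph V) (A B : Finset V) : ℕ :=
  letI : DecidableRel G.Adj := Classical.decRel _
  (Matrix.of fun (a : A) (b : B) => if G.Adj (a : V) (b : V) then (1 : ZMod 2) else 0).rank

/-- `G` contains the half-graph `H_t` as a semi-induced subgraph with the left side
embedded into `L` and the right side embedded into `R`. -/
def HasHalfGraphBetween {V : Type} (G : SimpleGraph V) (L R : Finset V) (t : ℕ) : Prop :=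
  ∃ (a b : Fin t → V), (∀ i, a i ∈ L) ∧ (∀ i, b i ∈ R) ∧
    Function.Injective a ∧ Function.Injective b ∧
    ∀ i j : Fin t, (G.Adj (a i) (b j) ↔ (i : ℕ) ≤ (j : ℕ))

private lemma rank_submatrix_le'' {K : Type} [Field K] {m n m' n' : Type}
    [Fintype m] [Fintype n] [Fintype m'] [Fintype n'] [DecidableEq m] [DecidableEq n]
    (A : Matrix m n K) (f : m' → m) (g : n' → n) :
    (A.submatrix f g).rank ≤ A.rank := by
  have h : A.submatrix f g =
      (Matrix.of fun (i : m') (u : m) => if u = f i then (1:K) else 0) * A *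
      (Matrix.of fun (v : n) (j : n') => if v = g j then (1:K) else 0) := by
    ext i j
    simp [Matrix.mul_apply, ite_mul, mul_ite]
  rw [h]
  exact le_trans (Matrix.rank_mul_le_left _ _) (Matrix.rank_mul_le_right _ _)

private lemma rank_triangular' (t : ℕ) :
    (Matrix.of fun (i j : Fin t) => if (i:ℕ) ≤ (j:ℕ) then (1 : ZMod 2) else 0).rank = t := by
  have hdet : (Matrix.of fun (i j : Fin t) =>
      if (i:ℕ) ≤ (j:ℕ) then (1 : ZMod 2) else 0).det = 1 := by
    rw [Matrix.det_of_upperTriangular]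
    · simp
    · intro i j hij
      simp only [Matrix.of_apply]
      rw [if_neg]
      simp only [id] at hij
      omega
  have := Matrix.rank_of_isUnit _
    ((Matrix.isUnit_iff_isUnit_det _).2 (by rw [hdet]; exact isUnit_one))
  simpa using this

private noncomputable def rowFn {V : Type} (G : SimpleGraph V) (R : Finset V) (u : V) :
    ↥R → ZMod 2 :=
  letI : DecidableRel G.Adj := Classical.decRel _
  fun v => if G.Adj u (v : V) then 1 else 0

private lemma rowFn_eq_one {V : Type} {G : SimpleGraph V} {R : Finset V} {u : V} {v : ↥R}
    (h : G.Adj u ↑v) : rowFn G R u v = 1 := by simp [rowFn, h]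

private lemma rowFn_eq_zero {V : Type} {G : SimpleGraph V} {R : Finset V} {u : V} {v : ↥R}
    (h : ¬ G.Adj u ↑v) : rowFn G R u v = 0 := by simp [rowFn, h]

open Finset Submodule Module in
private lemma biadjRank_le_card_rows {V : Type} (G : SimpleGraph V) (L R : Finset V)
    [DecidableEq (↥R → ZMod 2)] :
    biadjRank G L R ≤ ((L.image (rowFn G R)).erase 0).card := by
  classical
  set Rws : Finset (↥R → ZMod 2) := (L.image (rowFn G R)).erase 0 with hRws
  show (Matrix.of fun (a : ↥L) (b : ↥R) => rowFn G R ↑a b).rank ≤ Rws.card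
  set M : Matrix ↥L ↥R (ZMod 2) := Matrix.of fun (a : ↥L) (b : ↥R) => rowFn G R ↑a b with hM
  rw [Matrix.rank_eq_finrank_span_row]
  have hsub : Set.range (M : ↥L → ↥R → ZMod 2) ⊆ (insert 0 ↑Rws : Set (↥R → ZMod 2)) := by
    rintro x ⟨u, rfl⟩
    by_cases h0 : rowFn G R ↑u = 0
    · exact Set.mem_insert_iff.2 (Or.inl h0)
    · exact Set.mem_insert_iff.2 (Or.inr (by
        simp only [Rws, Finset.coe_erase, Set.mem_diff, Set.mem_singleton_iff]
        exact ⟨Finset.mem_coe.2 ((Finset.mem_image (f := rowFn G R)).2 ⟨(u : V), u.2, rfl⟩), h0⟩))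
  calc finrank (ZMod 2) (span (ZMod 2) (Set.range M))
      ≤ finrank (ZMod 2) (span (ZMod 2) (insert 0 ↑Rws : Set (↥R → ZMod 2))) :=
        Submodule.finrank_mono (span_mono hsub)
    _ = finrank (ZMod 2) (span (ZMod 2) (↑Rws : Set (↥R → ZMod 2))) := by
        rw [Submodule.span_insert_zero]
    _ ≤ Rws.card := finrank_span_finset_le_card Rws

/-- A partial half-graph `H` with sides `L` and `R` contains an induced (semi-induced,
with sides embedded into `L` and `R` respectively) half-graph `H_t` if and only if
`rk_H(L,R) ≥ t`. -/
theorem partialHalfGraph_halfGraph_iff_rank {V : Type} (G : SimpleGraph V)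
    (L R : Finset V) (hLR : Disjoint L R) (hpart : IsPartialHalfGraph G L R) (t : ℕ) :
    HasHalfGraphBetween G L R t ↔ t ≤ biadjRank G L R := by
  classical
  obtain ⟨n, f, g, hf, hg, hadj⟩ := hpart
  have hval : ∀ u ∈ L, ∀ v : ↥R,
      rowFn G R u v = (if (f u : ℕ) ≤ (g ↑v : ℕ) then 1 else 0) := by
    intro u hu v
    by_cases h : G.Adj u ↑v
    · rw [rowFn_eq_one h, if_pos ((hadj u hu ↑v v.2).1 h)]
    · rw [rowFn_eq_zero h, if_neg (fun hle => h ((hadj u hu ↑v v.2).2 hle))]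
  constructor
  · rintro ⟨a, b, haL, hbR, hainj, hbinj, hG⟩
    show t ≤ (Matrix.of fun (x : ↥L) (y : ↥R) => rowFn G R ↑x y).rank
    set M : Matrix ↥L ↥R (ZMod 2) := Matrix.of fun (x : ↥L) (y : ↥R) => rowFn G R ↑x y with hM
    have hsub : M.submatrix (fun i : Fin t => (⟨a i, haL i⟩ : ↥L))
        (fun j : Fin t => (⟨b j, hbR j⟩ : ↥R)) =
        Matrix.of fun (i j : Fin t) => if (i:ℕ) ≤ (j:ℕ) then (1 : ZMod 2) else 0 := by
      ext i j
      simp only [hM, Matrix.submatrix_apply, Matrix.of_apply]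
      by_cases hij : (i:ℕ) ≤ (j:ℕ)
      · rw [if_pos hij]; exact rowFn_eq_one ((hG i j).2 hij)
      · rw [if_neg hij]; exact rowFn_eq_zero (fun h => hij ((hG i j).1 h))
    calc t = (Matrix.of fun (i j : Fin t) =>
            if (i:ℕ) ≤ (j:ℕ) then (1 : ZMod 2) else 0).rank := (rank_triangular' t).symm
      _ = (M.submatrix _ _).rank := by rw [hsub]
      _ ≤ M.rank := rank_submatrix_le'' M _ _
  · intro ht
    have ht' : t ≤ ((L.image (rowFn G R)).erase 0).card :=
      le_trans ht (biadjRank_le_card_rows G L R)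
    set Rws : Finset (↥R → ZMod 2) := (L.image (rowFn G R)).erase 0 with hRws
    have hrep : ∀ ρ : ↥Rws, ∃ u, u ∈ L ∧ rowFn G R u = ↑ρ := by
      intro ρ
      have h : (↑ρ : ↥R → ZMod 2) ∈ (L.image (rowFn G R)).erase 0 := ρ.2
      rw [Finset.mem_erase, Finset.mem_image] at h
      obtain ⟨-, u, hu, hu'⟩ := h
      exact ⟨u, hu, hu'⟩
    have hdet : ∀ u ∈ L, ∀ u' ∈ L, f u = f u' → rowFn G R u = rowFn G R u' := by
      intro u hu u' hu' hff
      funext v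
      rw [hval u hu v, hval u' hu' v, hff]
    set F : Finset (Fin n) := Rws.attach.image (fun ρ => f (hrep ρ).choose) with hF
    have hcard : F.card = Rws.card := by
      rw [hF, Finset.card_image_of_injOn, Finset.card_attach]
      intro ρ _ ρ' _ hff
      have h1 := (hrep ρ).choose_spec
      have h2 := (hrep ρ').choose_spec
      have : (↑ρ : ↥R → ZMod 2) = ↑ρ' := by
        rw [← h1.2, ← h2.2]; exact hdet _ h1.1 _ h2.1 hff
      exact Subtype.ext this
    have hFrep : ∀ c ∈ F, ∃ u ∈ L, f u = c ∧ rowFn G R u ∈ Rws := by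
      intro c hc
      rw [hF, Finset.mem_image] at hc
      obtain ⟨ρ, -, hρ⟩ := hc
      refine ⟨(hrep ρ).choose, (hrep ρ).choose_spec.1, hρ, ?_⟩
      rw [(hrep ρ).choose_spec.2]; exact ρ.2
    have hF2 : ∀ c ∈ F, ∃ v : ↥R, (c : ℕ) ≤ (g ↑v : ℕ) := by
      intro c hc
      obtain ⟨u, hu, rfl, hmem⟩ := hFrep c hc
      have h0 : rowFn G R u ≠ 0 := Finset.ne_of_mem_erase hmem
      by_contra hno
      push_neg at hno
      apply h0
      funext v
      rw [hval u hu v, if_neg (not_le.2 (hno v))]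
      rfl
    have hF3 : ∀ c ∈ F, ∀ c' ∈ F, (c:ℕ) < (c':ℕ) →
        ∃ v : ↥R, ((c:ℕ) ≤ (g ↑v:ℕ)) ∧ ¬ ((c':ℕ) ≤ (g ↑v:ℕ)) := by
      intro c hc c' hc' hlt
      rw [hF, Finset.mem_image] at hc hc'
      obtain ⟨ρ, -, hρ⟩ := hc
      obtain ⟨ρ', -, hρ'⟩ := hc'
      have hu : (hrep ρ).choose ∈ L := (hrep ρ).choose_spec.1
      have hu' : (hrep ρ').choose ∈ L := (hrep ρ').choose_spec.1
      have hne : rowFn G R (hrep ρ).choose ≠ rowFn G R (hrep ρ').choose := by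
        rw [(hrep ρ).choose_spec.2, (hrep ρ').choose_spec.2]
        intro he
        have hρρ : ρ = ρ' := Subtype.ext he
        rw [← hρ, ← hρ', hρρ] at hlt
        exact lt_irrefl _ hlt
      have hex : ∃ v : ↥R, rowFn G R (hrep ρ).choose v ≠ rowFn G R (hrep ρ').choose v := by
        by_contra hno; push_neg at hno; exact hne (funext hno)
      obtain ⟨v, hv⟩ := hex
      rw [hval _ hu v, hval _ hu' v, hρ, hρ'] at hv
      by_cases h1 : (c:ℕ) ≤ (g ↑v:ℕ)
      · refine ⟨v, h1, fun h2 => ?_⟩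
        rw [if_pos h1, if_pos h2] at hv; exact hv rfl
      · exfalso
        have h2 : ¬ (c':ℕ) ≤ (g ↑v:ℕ) := fun h2 => h1 (le_trans (le_of_lt hlt) h2)
        rw [if_neg h1, if_neg h2] at hv; exact hv rfl
    have ht'' : t ≤ F.card := by rw [hcard]; exact ht'
    set c : Fin t → Fin n :=
      fun i => ↑(F.orderIsoOfFin rfl ⟨(i:ℕ), lt_of_lt_of_le i.isLt ht''⟩) with hc
    have hcF : ∀ i, c i ∈ F := fun i => (F.orderIsoOfFin rfl _).2
    have hcmono : ∀ i j : Fin t, (i:ℕ) < (j:ℕ) → (c i : ℕ) < (c j : ℕ) := by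
      intro i j hij
      have h1 : (⟨(i:ℕ), lt_of_lt_of_le i.isLt ht''⟩ : Fin F.card) <
          ⟨(j:ℕ), lt_of_lt_of_le j.isLt ht''⟩ := hij
      have h2 := (F.orderIsoOfFin rfl).strictMono h1
      exact Fin.lt_def.mp (Subtype.coe_lt_coe.mpr h2)
    have hcmono' : ∀ i j : Fin t, (i:ℕ) ≤ (j:ℕ) → (c i : ℕ) ≤ (c j : ℕ) := by
      intro i j hij
      rcases eq_or_lt_of_le hij with h | h
      · rw [Fin.ext h]
      · exact le_of_lt (hcmono i j h)
    have hA : ∀ i : Fin t, ∃ u, u ∈ L ∧ f u = c i := by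
      intro i
      obtain ⟨u, hu, hcu, -⟩ := hFrep (c i) (hcF i)
      exact ⟨u, hu, hcu⟩
    have hB : ∀ i : Fin t, ∃ v : ↥R, ((c i : ℕ) ≤ (g ↑v : ℕ)) ∧
        ∀ hi : (i:ℕ)+1 < t, ¬ ((c ⟨(i:ℕ)+1, hi⟩ : ℕ) ≤ (g ↑v : ℕ)) := by
      intro i
      by_cases hi : (i:ℕ)+1 < t
      · obtain ⟨v, h1, h2⟩ := hF3 (c i) (hcF i) (c ⟨(i:ℕ)+1, hi⟩) (hcF _)
          (hcmono i ⟨(i:ℕ)+1, hi⟩ (by simp))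
        exact ⟨v, h1, fun hi' => h2⟩
      · obtain ⟨v, h1⟩ := hF2 (c i) (hcF i)
        exact ⟨v, h1, fun hi' => absurd hi' hi⟩
    have hcinj : ∀ i j : Fin t, (c i : ℕ) = (c j : ℕ) → i = j := by
      intro i j h
      rcases lt_trichotomy (i:ℕ) (j:ℕ) with h' | h' | h'
      · exact absurd h (ne_of_lt (hcmono i j h'))
      · exact Fin.ext h'
      · exact absurd h.symm (ne_of_lt (hcmono j i h'))
    refine ⟨fun i => (hA i).choose, fun i => ↑((hB i).choose),
      fun i => (hA i).choose_spec.1, fun i => ((hB i).choose).2, ?_, ?_, ?_⟩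
    · intro i j hij
      simp only at hij
      apply hcinj
      rw [← (hA i).choose_spec.2, ← (hA j).choose_spec.2, hij]
    · have hblt : ∀ i j : Fin t, (i:ℕ) < (j:ℕ) →
          (g ↑((hB i).choose) : ℕ) < (g ↑((hB j).choose) : ℕ) := by
        intro i j hij
        have hi : (i:ℕ)+1 < t := lt_of_le_of_lt (Nat.succ_le_of_lt hij) j.isLt
        have h2 := not_le.mp ((hB i).choose_spec.2 hi)
        have h3 : (c ⟨(i:ℕ)+1, hi⟩ : ℕ) ≤ (c j : ℕ) :=
          hcmono' ⟨(i:ℕ)+1, hi⟩ j (Nat.succ_le_of_lt hij)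
        have h4 := (hB j).choose_spec.1
        exact lt_of_lt_of_le h2 (le_trans h3 h4)
      intro i j hij
      simp only at hij
      rcases lt_trichotomy (i:ℕ) (j:ℕ) with h' | h' | h'
      · exact absurd (congrArg (fun x => (g x : ℕ)) hij) (ne_of_lt (hblt i j h'))
      · exact Fin.ext h'
      · exact absurd (congrArg (fun x => (g x : ℕ)) hij).symm (ne_of_lt (hblt j i h'))
    · intro i j
      simp only
      rw [hadj _ ((hA i).choose_spec.1) _ (((hB j).choose).2), (hA i).choose_spec.2]
      constructor
      · intro h
        by_contra hij
        push_neg at hij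
        have hj : (j:ℕ)+1 < t := lt_of_le_of_lt (Nat.succ_le_of_lt hij) i.isLt
        have h2 := not_le.mp ((hB j).choose_spec.2 hj)
        have h3 : (c ⟨(j:ℕ)+1, hj⟩ : ℕ) ≤ (c i : ℕ) :=
          hcmono' ⟨(j:ℕ)+1, hj⟩ i (Nat.succ_le_of_lt hij)
        exact absurd (lt_of_le_of_lt h h2) (not_lt.2 h3)
      · intro h
        exact le_trans (hcmono' i j h) (hB j).choose_spec.1
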